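/- The quadratic weight-prior is the linearization of the K-prior: applying the first-order Taylor approximation h(φ_i^⊤w) − h(φ_i^⊤w*) ≈ h'(φ_i^⊤w*) φ_i^⊤(w − w*) to the K-prior gradient yields exactly the gradient of R_quad(w) = (1/2)(w − w*)^⊤(G*(X) + δI)(w − w*), where G*(X) = Σ_{i∈X} φ_i h'(φ_i^⊤w*) φ_i^⊤. That is, G*(X)(w−w*) + δ(w−w*) = ∇R_quad(w). -/

import Mathlib

open RealInnerProductSpace

/-- The quadratic weight-prior is the linearization of the K-prior: applying the
first-order Taylor approximation to the K-prior gradient yields exactly the gradient of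
`R_quad(w) = (1/2)⟪w − w*, (G*(X) + δI)(w − w*)⟫`, i.e.
`G*(X)(w−w*) + δ(w−w*) = ∇R_quad(w)`. -/
theorem stmt7 {P : ℕ} {ι : Type*} (X : Finset ι)
    (φ : ι → EuclideanSpace ℝ (Fin P))
    (h : ℝ → ℝ) (hh : Differentiable ℝ h)
    (hh' : ∀ x, 0 ≤ deriv h x)  -- h' ≥ 0 for convex A
    (δ : ℝ) (hδ : 0 < δ)
    (wstar : EuclideanSpace ℝ (Fin P))
    (G : EuclideanSpace ℝ (Fin P) →ₗ[ℝ] EuclideanSpace ℝ (Fin P))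
    (hG : ∀ v, G v = ∑ i ∈ X, (deriv h ⟪φ i, wstar⟫ * ⟪φ i, v⟫) • φ i)
    (w : EuclideanSpace ℝ (Fin P)) :
    HasGradientAt
      (fun w => (1 / 2 : ℝ) * ⟪w - wstar, G (w - wstar) + δ • (w - wstar)⟫)
      (G (w - wstar) + δ • (w - wstar)) w := by
  have hGsym : ∀ u v : EuclideanSpace ℝ (Fin P), ⟪G u, v⟫ = ⟪u, G v⟫ := by
    intro u v
    rw [hG u, hG v, sum_inner, inner_sum]
    refine Finset.sum_congr rfl fun i _ => ?_
    rw [real_inner_smul_left, real_inner_smul_right, real_inner_comm u (φ i)]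
    ring
  set A : EuclideanSpace ℝ (Fin P) →L[ℝ] EuclideanSpace ℝ (Fin P) := (G + δ • LinearMap.id).toContinuousLinearMap with hA
  have hAsym : ∀ u v : EuclideanSpace ℝ (Fin P), ⟪A u, v⟫ = ⟪u, A v⟫ := by
    intro u v
    simp only [hA, LinearMap.coe_toContinuousLinearMap', LinearMap.add_apply,
      LinearMap.smul_apply, LinearMap.id_apply, inner_add_left, inner_add_right,
      real_inner_smul_left, real_inner_smul_right, hGsym]
  have hfeq : (fun w : EuclideanSpace ℝ (Fin P) => (1 / 2 : ℝ) * ⟪w - wstar, G (w - wstar) + δ • (w - wstar)⟫)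
      = fun w : EuclideanSpace ℝ (Fin P) => (1 / 2 : ℝ) * ⟪w - wstar, A (w - wstar)⟫ := by
    funext u
    simp [hA]
  have hgeq : G (w - wstar) + δ • (w - wstar) = A (w - wstar) := by simp [hA]
  rw [hfeq, hgeq, hasGradientAt_iff_hasFDerivAt]
  have h1 : HasFDerivAt (fun u : EuclideanSpace ℝ (Fin P) => u - wstar) (ContinuousLinearMap.id ℝ (EuclideanSpace ℝ (Fin P))) w :=
    (hasFDerivAt_id w).sub_const wstar
  have h2 : HasFDerivAt (fun u : EuclideanSpace ℝ (Fin P) => A (u - wstar)) A w := by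
    have := A.hasFDerivAt.comp w h1
    rwa [ContinuousLinearMap.comp_id] at this
  have h3 := (h1.inner ℝ h2).const_mul (1 / 2 : ℝ)
  convert h3 using 1
  · rfl
  ext u
  simp only [ContinuousLinearMap.smul_apply, ContinuousLinearMap.comp_apply,
    ContinuousLinearMap.prod_apply, ContinuousLinearMap.coe_id', id_eq,
    fderivInnerCLM_apply, smul_eq_mul]
  rw [InnerProductSpace.toDual_apply_apply]
  rw [real_inner_comm u (A (w - wstar)), ← hAsym (w - wstar) u, real_inner_comm]
  ring
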